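/- Let p ≥ 11 be a prime with p ≡ 1 (mod 4). Then the ratio E(G_p)/E₀ satisfies E(G_p)/E₀ > (p^{3/2}/2) / ((p/2)(√p + 2)) = √p/(√p + 2); in particular, this ratio tends to 1 as p → ∞ along primes p ≡ 1 (mod 4). -/

import Mathlib

/-- The adjacency matrix of a simple graph over `ℝ` is Hermitian. -/
theorem SimpleGraph.adjMatrix_isHermitian {V : Type*} [Fintype V] (G : SimpleGraph V)
    [DecidableRel G.Adj] : (G.adjMatrix ℝ).IsHermitian := by
  rw [Matrix.IsHermitian, Matrix.conjTranspose_eq_transpose_of_trivial]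
  exact SimpleGraph.isSymm_adjMatrix G

/-- The eigenvalues of the (real, symmetric) adjacency matrix of a simple graph,
indexed by the vertex set (listed with multiplicity). -/
noncomputable def SimpleGraph.adjEigenvalues {V : Type*} [Fintype V] [DecidableEq V]
    (G : SimpleGraph V) : V → ℝ :=
  letI := Classical.decRel G.Adj
  (G.adjMatrix_isHermitian).eigenvalues

/-- The energy of a simple graph: the sum of the absolute values of the
eigenvalues of its adjacency matrix. -/
noncomputable def SimpleGraph.energy {V : Type*} [Fintype V] [DecidableEq V]
    (G : SimpleGraph V) : ℝ :=
  ∑ v, |G.adjEigenvalues v|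

/-- The Paley graph of order `p` (for a prime `p ≡ 1 (mod 4)`): the vertices are
the elements of `GF(p) = ZMod p`, and two distinct vertices are adjacent iff their
difference is a (nonzero) square in `GF(p)`. -/
def paleyGraph (p : ℕ) [Fact p.Prime] (hp : p % 4 = 1) : SimpleGraph (ZMod p) where
  Adj x y := x ≠ y ∧ IsSquare (x - y)
  symm := ⟨by
    rintro x y ⟨hne, hsq⟩
    refine ⟨hne.symm, ?_⟩
    have h1 : IsSquare (-1 : ZMod p) := ZMod.exists_sq_eq_neg_one_iff.2 (by omega)
    simpa [neg_one_mul, neg_sub] using h1.mul hsq⟩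
  loopless := ⟨fun x h => h.1 rfl⟩

instance paleyGraph.instDecidableRelAdj (p : ℕ) [Fact p.Prime] {hp : p % 4 = 1} :
    DecidableRel (paleyGraph p hp).Adj := fun _ _ => instDecidableAnd

/-- `E₀ = k + √(k(n-1)(n-k))` evaluated for the `(p-1)/2`-regular Paley graph on
`n = p` vertices: `E₀ = (p-1)/2 + √(((p-1)/2)(p-1)(p-(p-1)/2))`. -/
noncomputable def paleyE0 (p : ℕ) : ℝ :=
  ((p : ℝ) - 1) / 2 +
    Real.sqrt ((((p : ℝ) - 1) / 2) * ((p : ℝ) - 1) * ((p : ℝ) - ((p : ℝ) - 1) / 2))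


open Finset Matrix

namespace PaleyProofAux

variable {p : ℕ} [Fact p.Prime]

noncomputable def pchi (p : ℕ) [Fact p.Prime] (x : ZMod p) : ℝ :=
  ((quadraticChar (ZMod p) x : ℤ) : ℝ)

lemma pchi_zero : pchi p 0 = 0 := by simp [pchi]

lemma pchi_one : pchi p 1 = 1 := by simp [pchi]

lemma pchi_mul (x y : ZMod p) : pchi p (x * y) = pchi p x * pchi p y := by
  unfold pchi
  rw [map_mul (quadraticChar (ZMod p)) x y]
  push_cast
  ring

lemma pchi_sq {x : ZMod p} (hx : x ≠ 0) : pchi p x * pchi p x = 1 := by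
  have h := quadraticChar_sq_one hx
  unfold pchi
  rw [← Int.cast_mul, ← sq, h, Int.cast_one]

lemma ringChar_ne_two (hodd : p % 2 = 1) : ringChar (ZMod p) ≠ 2 := by
  rw [ZMod.ringChar_zmod_n]; omega

lemma pchi_sum (hodd : p % 2 = 1) : ∑ x : ZMod p, pchi p x = 0 := by
  have h := quadraticChar_sum_zero (F := ZMod p) (ringChar_ne_two hodd)
  have h2 : ((∑ x : ZMod p, quadraticChar (ZMod p) x : ℤ) : ℝ) = 0 := by rw [h]; simp
  rw [Int.cast_sum] at h2
  exact h2

lemma pchi_sum_sub_left (hodd : p % 2 = 1) (a : ZMod p) :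
    ∑ x : ZMod p, pchi p (a - x) = 0 := by
  rw [Fintype.sum_equiv (Equiv.subLeft a) (fun x => pchi p (a - x)) (pchi p)
    (fun x => by simp [Equiv.subLeft])]
  exact pchi_sum hodd

lemma pchi_sum_sub_right (hodd : p % 2 = 1) (a : ZMod p) :
    ∑ x : ZMod p, pchi p (x - a) = 0 := by
  rw [Fintype.sum_equiv (Equiv.subRight a) (fun x => pchi p (x - a)) (pchi p)
    (fun x => by simp [Equiv.subRight])]
  exact pchi_sum hodd

lemma pchi_sum_sq : ∑ x : ZMod p, pchi p x * pchi p x = (p : ℝ) - 1 := by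
  have key : ∀ x : ZMod p, pchi p x * pchi p x = 1 - (if x = 0 then 1 else 0) := by
    intro x
    by_cases hx : x = 0
    · simp [hx, pchi_zero]
    · simp [hx, pchi_sq hx]
  rw [Finset.sum_congr rfl (fun x _ => key x), Finset.sum_sub_distrib,
    Finset.sum_ite_eq' Finset.univ (0 : ZMod p) (fun _ => (1:ℝ))]
  simp [ZMod.card]

lemma pchi_sum_shift (hodd : p % 2 = 1) {a : ZMod p} (ha : a ≠ 0) :
    ∑ z : ZMod p, pchi p z * pchi p (z + a) = -1 := by
  rw [← Finset.sum_erase Finset.univ (a := (0 : ZMod p))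
    (f := fun z : ZMod p => pchi p z * pchi p (z + a)) (by simp [pchi_zero])]
  have step : ∀ z ∈ Finset.univ.erase (0 : ZMod p),
      pchi p z * pchi p (z + a) = pchi p (1 + a * z⁻¹) := by
    intro z hz
    have hz0 : z ≠ 0 := (Finset.mem_erase.1 hz).1
    have hza : z + a = z * (1 + a * z⁻¹) := by field_simp
    rw [hza, pchi_mul, ← mul_assoc, pchi_sq hz0, one_mul]
  rw [Finset.sum_congr rfl step]
  rw [Finset.sum_nbij' (i := fun z : ZMod p => 1 + a * z⁻¹)
    (j := fun w : ZMod p => a * (w - 1)⁻¹) (t := Finset.univ.erase (1 : ZMod p))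
    (g := pchi p)
    (by intro z hz
        have hz0 : z ≠ 0 := (Finset.mem_erase.1 hz).1
        simp only [Finset.mem_erase, Finset.mem_univ, and_true]
        intro h
        have : a * z⁻¹ = 0 := by linear_combination h
        simp [ha, inv_eq_zero, hz0] at this)
    (by intro w hw
        have hw1 : w ≠ 1 := (Finset.mem_erase.1 hw).1
        simp only [Finset.mem_erase, Finset.mem_univ, and_true]
        have : w - 1 ≠ 0 := sub_ne_zero.2 hw1
        simp [ha, inv_eq_zero, this])
    (by intro z hz
        have hz0 : z ≠ 0 := (Finset.mem_erase.1 hz).1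
        field_simp
        simp [ha])
    (by intro w hw
        have hw1 : w - 1 ≠ 0 := sub_ne_zero.2 (Finset.mem_erase.1 hw).1
        field_simp
        ring)
    (fun _ _ => rfl)]
  have h1 := Finset.add_sum_erase Finset.univ (pchi p) (Finset.mem_univ (1 : ZMod p))
  have hsum := pchi_sum (p := p) hodd
  rw [hsum] at h1
  have := pchi_one (p := p)
  linarith

lemma pchi_neg_one (hp : p % 4 = 1) : pchi p (-1) = 1 := by
  have hs : IsSquare (-1 : ZMod p) := ZMod.exists_sq_eq_neg_one_iff.2 (by omega)
  have hne : (-1 : ZMod p) ≠ 0 := neg_ne_zero.2 one_ne_zero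
  unfold pchi
  rw [(quadraticChar_one_iff_isSquare hne).2 hs]
  norm_num

lemma paley_charsum (hp : p % 4 = 1) (x y : ZMod p) :
    ∑ z : ZMod p, (1 + pchi p (x - z)) * (1 + pchi p (z - y))
      = (p : ℝ) + (if x = y then (p:ℝ) - 1 else -1) := by
  have hodd : p % 2 = 1 := by omega
  have hexp : ∀ z : ZMod p, (1 + pchi p (x - z)) * (1 + pchi p (z - y))
      = 1 + pchi p (x - z) + pchi p (z - y) + pchi p (x - z) * pchi p (z - y) := by
    intro z; ring
  rw [Finset.sum_congr rfl fun z _ => hexp z]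
  rw [Finset.sum_add_distrib, Finset.sum_add_distrib, Finset.sum_add_distrib]
  rw [pchi_sum_sub_left hodd x, pchi_sum_sub_right hodd y]
  have hstep : ∀ z : ZMod p, pchi p (x - z) = pchi p (z - x) := by
    intro z
    have hz : x - z = -1 * (z - x) := by ring
    rw [hz, pchi_mul, pchi_neg_one hp, one_mul]
  have hmain : ∑ z : ZMod p, pchi p (x - z) * pchi p (z - y)
      = if x = y then (p:ℝ) - 1 else -1 := by
    rw [Finset.sum_congr rfl fun z _ => by rw [hstep z]]
    rw [Fintype.sum_equiv (Equiv.subRight x)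
      (fun z => pchi p (z - x) * pchi p (z - y))
      (fun u => pchi p u * pchi p (u + (x - y)))
      (fun z => by
        simp only [Equiv.subRight_apply]
        congr 2
        ring)]
    by_cases hxy : x = y
    · rw [if_pos hxy, hxy]
      simp only [sub_self, add_zero]
      exact pchi_sum_sq
    · rw [if_neg hxy]
      exact pchi_sum_shift hodd (sub_ne_zero.2 hxy)
  rw [hmain]
  simp [ZMod.card]

lemma paley_entry (hp : p % 4 = 1) [inst : DecidableRel (paleyGraph p hp).Adj] (x y : ZMod p) :
    2 * (paleyGraph p hp).adjMatrix ℝ x y + (if x = y then (1:ℝ) else 0)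
      = 1 + pchi p (x - y) := by
  by_cases hxy : x = y
  · subst hxy
    rw [SimpleGraph.adjMatrix_apply]
    simp [pchi, paleyGraph]
  · have hne : x - y ≠ 0 := sub_ne_zero.2 hxy
    rw [SimpleGraph.adjMatrix_apply]
    by_cases hsq : IsSquare (x - y)
    · have h1 : quadraticChar (ZMod p) (x - y) = 1 :=
        (quadraticChar_one_iff_isSquare hne).2 hsq
      simp [paleyGraph, hxy, hsq, pchi, h1]
      norm_num
    · have h1 : quadraticChar (ZMod p) (x - y) = -1 :=
        quadraticChar_neg_one_iff_not_isSquare.2 hsq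
      simp [paleyGraph, hxy, hsq, pchi, h1]

lemma paley_B_entry (hp : p % 4 = 1) [inst : DecidableRel (paleyGraph p hp).Adj] (x y : ZMod p) :
    ((2:ℝ) • (paleyGraph p hp).adjMatrix ℝ + 1) x y = 1 + pchi p (x - y) := by
  rw [← paley_entry hp x y]
  simp [Matrix.add_apply, Matrix.smul_apply, Matrix.one_apply, smul_eq_mul]

lemma paley_rowsum (hp : p % 4 = 1) [inst : DecidableRel (paleyGraph p hp).Adj] (x : ZMod p) :
    ∑ y : ZMod p, (paleyGraph p hp).adjMatrix ℝ x y = ((p:ℝ) - 1) / 2 := by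
  have hodd : p % 2 = 1 := by omega
  have hsum : ∑ y : ZMod p,
      (2 * (paleyGraph p hp).adjMatrix ℝ x y + (if x = y then (1:ℝ) else 0)) = (p : ℝ) := by
    rw [Finset.sum_congr rfl (fun y _ => paley_entry hp x y), Finset.sum_add_distrib,
      pchi_sum_sub_left hodd x]
    simp [ZMod.card]
  rw [Finset.sum_add_distrib, ← Finset.mul_sum,
    Finset.sum_ite_eq Finset.univ x (fun _ => (1:ℝ)), if_pos (Finset.mem_univ x)] at hsum
  linarith

lemma paley_B_sq (hp : p % 4 = 1) [inst : DecidableRel (paleyGraph p hp).Adj] :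
    (((2:ℝ) • (paleyGraph p hp).adjMatrix ℝ + 1) * ((2:ℝ) • (paleyGraph p hp).adjMatrix ℝ + 1))
      = (p:ℝ) • (1 : Matrix (ZMod p) (ZMod p) ℝ)
        + ((p:ℝ) - 1) • (Matrix.of fun _ _ => (1:ℝ)) := by
  ext x y
  rw [Matrix.mul_apply]
  rw [Finset.sum_congr rfl (fun z _ => by rw [paley_B_entry hp x z, paley_B_entry hp z y])]
  rw [paley_charsum hp x y]
  simp only [Matrix.add_apply, Matrix.smul_apply, Matrix.one_apply, Matrix.of_apply,
    smul_eq_mul]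
  by_cases hxy : x = y
  · rw [if_pos hxy, if_pos hxy]; ring
  · rw [if_neg hxy, if_neg hxy]; ring

lemma paley_AJ (hp : p % 4 = 1) [inst : DecidableRel (paleyGraph p hp).Adj] :
    (paleyGraph p hp).adjMatrix ℝ * (Matrix.of fun _ _ => (1:ℝ))
      = (((p:ℝ) - 1) / 2) • (Matrix.of fun _ _ => (1:ℝ)) := by
  ext x y
  rw [Matrix.mul_apply]
  simp only [Matrix.of_apply, mul_one, Matrix.smul_apply, smul_eq_mul]
  rw [paley_rowsum hp x]

lemma paley_cubic (hp : p % 4 = 1) [inst : DecidableRel (paleyGraph p hp).Adj] :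
    ((paleyGraph p hp).adjMatrix ℝ - (((p:ℝ) - 1) / 2) • 1) *
      ((((2:ℝ) • (paleyGraph p hp).adjMatrix ℝ + 1) *
        ((2:ℝ) • (paleyGraph p hp).adjMatrix ℝ + 1)) - (p:ℝ) • 1) = 0 := by
  rw [paley_B_sq hp]
  have h1 : (p:ℝ) • (1 : Matrix (ZMod p) (ZMod p) ℝ)
      + ((p:ℝ) - 1) • (Matrix.of fun _ _ => (1:ℝ)) - (p:ℝ) • 1
      = ((p:ℝ) - 1) • (Matrix.of fun _ _ => (1:ℝ)) := by
    rw [add_sub_cancel_left]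
  rw [h1, Matrix.mul_smul, Matrix.sub_mul, paley_AJ hp, Matrix.smul_mul, Matrix.one_mul,
    sub_self, smul_zero]

lemma paley_eigen (hp : p % 4 = 1) [inst : DecidableRel (paleyGraph p hp).Adj]
    (hH : ((paleyGraph p hp).adjMatrix ℝ).IsHermitian) (i : ZMod p) :
    hH.eigenvalues i = ((p:ℝ) - 1) / 2 ∨ (2 * hH.eigenvalues i + 1) ^ 2 = p := by
  set A := (paleyGraph p hp).adjMatrix ℝ with hA
  set lam := hH.eigenvalues i with hlam
  set v : ZMod p → ℝ := ⇑(hH.eigenvectorBasis i) with hvdef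
  have hv : A *ᵥ v = lam • v := hH.mulVec_eigenvectorBasis i
  have hB : ((2:ℝ) • A + 1) *ᵥ v = (2 * lam + 1) • v := by
    rw [Matrix.add_mulVec, Matrix.smul_mulVec, hv, Matrix.one_mulVec, smul_smul, add_smul,
      one_smul]
  have hBB : (((2:ℝ) • A + 1) * ((2:ℝ) • A + 1)) *ᵥ v = ((2 * lam + 1) ^ 2) • v := by
    rw [← Matrix.mulVec_mulVec, hB, Matrix.mulVec_smul, hB, smul_smul, ← sq]
  have hM : ((((2:ℝ) • A + 1) * ((2:ℝ) • A + 1)) - (p:ℝ) • 1) *ᵥ v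
      = ((2 * lam + 1) ^ 2 - (p:ℝ)) • v := by
    rw [Matrix.sub_mulVec, hBB, Matrix.smul_mulVec, Matrix.one_mulVec, ← sub_smul]
  have h3 : ((A - (((p:ℝ) - 1) / 2) • 1) *
      ((((2:ℝ) • A + 1) * ((2:ℝ) • A + 1)) - (p:ℝ) • 1)) *ᵥ v
      = ((lam - ((p:ℝ) - 1) / 2) * ((2 * lam + 1) ^ 2 - p)) • v := by
    rw [← Matrix.mulVec_mulVec, hM, Matrix.mulVec_smul, Matrix.sub_mulVec, hv,
      Matrix.smul_mulVec, Matrix.one_mulVec, ← sub_smul, smul_smul, mul_comm]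
  rw [paley_cubic hp, Matrix.zero_mulVec] at h3
  have hvne : v ≠ 0 := by
    intro hc
    exact hH.eigenvectorBasis.orthonormal.ne_zero i (by ext j; exact congrFun hc j)
  have hzero := (smul_eq_zero.1 h3.symm).resolve_right hvne
  rcases mul_eq_zero.1 hzero with h | h
  · left; linarith [sub_eq_zero.1 h]
  · right; linarith [sub_eq_zero.1 h]

lemma paley_trace (hp : p % 4 = 1) [inst : DecidableRel (paleyGraph p hp).Adj]
    (hH : ((paleyGraph p hp).adjMatrix ℝ).IsHermitian) :
    ∑ i : ZMod p, hH.eigenvalues i = 0 := by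
  have h0 : ((paleyGraph p hp).adjMatrix ℝ).trace = 0 := by
    simp [Matrix.trace, Matrix.diag]
  have h2 : ((paleyGraph p hp).adjMatrix ℝ).trace
      = Matrix.trace (Matrix.diagonal (RCLike.ofReal ∘ hH.eigenvalues)) := by
    conv_lhs => rw [hH.spectral_theorem]
    rw [Unitary.conjStarAlgAut_apply, Matrix.trace_mul_cycle, Unitary.coe_star_mul_self, Matrix.one_mul]
  rw [h0] at h2
  have h3 : Matrix.trace (Matrix.diagonal (RCLike.ofReal ∘ hH.eigenvalues))
      = ∑ i : ZMod p, hH.eigenvalues i := by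
    rw [Matrix.trace_diagonal]
    simp
  rw [h3] at h2
  linarith

lemma paley_main (p : ℕ) (hp1 : p.Prime) (hp11 : 11 ≤ p) (hp : p % 4 = 1) :
    haveI : Fact p.Prime := ⟨hp1⟩
    Real.sqrt p / (Real.sqrt p + 2) < (paleyGraph p hp).energy / paleyE0 p := by
  haveI : Fact p.Prime := ⟨hp1⟩
  letI instC : DecidableRel (paleyGraph p hp).Adj := Classical.decRel _
  set hH := (paleyGraph p hp).adjMatrix_isHermitian with hHdef
  set lam := hH.eigenvalues with hlamdef
  have henergy : (paleyGraph p hp).energy = ∑ i : ZMod p, |lam i| := rfl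
  have hp1r : (11:ℝ) ≤ (p:ℝ) := by exact_mod_cast hp11
  set s := Real.sqrt p with hsdef
  have hs2 : s ^ 2 = p := Real.sq_sqrt (by linarith)
  have hs3 : 3 ≤ s := by
    have h9 : Real.sqrt 9 ≤ s := Real.sqrt_le_sqrt (by linarith)
    rw [show (9:ℝ) = 3 ^ 2 by norm_num, Real.sqrt_sq (by norm_num)] at h9
    exact h9
  have hs0 : (0:ℝ) < s := by linarith
  have heig : ∀ i : ZMod p, lam i = ((p:ℝ) - 1) / 2 ∨ (2 * lam i + 1) ^ 2 = (p:ℝ) :=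
    fun i => paley_eigen hp hH i
  have htr : ∑ i : ZMod p, lam i = 0 := paley_trace hp hH
  have hpt : ∀ i : ZMod p, ((p:ℝ) - 1) / 2 - lam i ≤ |lam i| * s := by
    intro i
    rcases heig i with h | h
    · rw [h, sub_self]
      positivity
    · have hfac : (2 * lam i + 1 - s) * (2 * lam i + 1 + s) = 0 := by
        linear_combination h - hs2
      rcases mul_eq_zero.1 hfac with hc | hc
      · have hl : lam i = (s - 1) / 2 := by linarith
        rw [hl, abs_of_nonneg (by linarith)]
        nlinarith [hs2]
      · have hl : lam i = -(s + 1) / 2 := by linarith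
        rw [hl, abs_of_nonpos (by linarith)]
        nlinarith [hs2]
  have hsum : (p:ℝ) * (((p:ℝ) - 1) / 2) ≤ (∑ i : ZMod p, |lam i|) * s := by
    have h1 : ∑ i : ZMod p, (((p:ℝ) - 1) / 2 - lam i) ≤ ∑ i : ZMod p, |lam i| * s :=
      Finset.sum_le_sum (fun i _ => hpt i)
    rw [Finset.sum_sub_distrib, htr, sub_zero, Finset.sum_const, ← Finset.sum_mul] at h1
    simpa [ZMod.card, nsmul_eq_mul] using h1
  set t := Real.sqrt ((p:ℝ) + 1) with htdef
  have ht2 : t ^ 2 = (p:ℝ) + 1 := Real.sq_sqrt (by linarith)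
  have ht0 : (0:ℝ) ≤ t := Real.sqrt_nonneg _
  have hE0 : paleyE0 p = (((p:ℝ) - 1) / 2) * (1 + t) := by
    unfold paleyE0
    have harg : (((p : ℝ) - 1) / 2) * ((p : ℝ) - 1) * ((p : ℝ) - ((p : ℝ) - 1) / 2)
        = (((p:ℝ) - 1) / 2) ^ 2 * ((p:ℝ) + 1) := by ring
    rw [harg, Real.sqrt_mul (sq_nonneg _), Real.sqrt_sq (by linarith)]
    ring
  have hc : (0:ℝ) < ((p:ℝ) - 1) / 2 := by linarith
  have hE0pos : 0 < paleyE0 p := by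
    rw [hE0]
    nlinarith [ht0]
  have ht_lt : t < s + 1 := by nlinarith [ht2, hs2, ht0, hs3]
  rw [henergy, div_lt_div_iff₀ (by linarith) hE0pos, hE0]
  have h2' : (s * (((p:ℝ) - 1) / 2)) * s ≤ (∑ i : ZMod p, |lam i|) * s := by
    nlinarith [hsum, hs2]
  have h2 := le_of_mul_le_mul_right h2' hs0
  nlinarith [mul_le_mul_of_nonneg_right h2 (show (0:ℝ) ≤ s + 2 by linarith),
    mul_pos (mul_pos hs0 hc) (show (0:ℝ) < s + 1 - t by linarith)]

end PaleyProofAux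

/-- For a prime `p ≥ 11` with `p ≡ 1 (mod 4)`,
`E(G_p)/E₀ > (p^(3/2)/2)/((p/2)(√p+2)) = √p/(√p+2)`; in particular the ratio
`E(G_p)/E₀` tends to `1` as `p → ∞` along primes `p ≡ 1 (mod 4)`. -/
theorem energy_paleyGraph_ratio (p : ℕ) (hp1 : p.Prime) (hp11 : 11 ≤ p) (hp : p % 4 = 1) :
    (haveI : Fact p.Prime := ⟨hp1⟩;
      (paleyGraph p hp).energy / paleyE0 p >
        ((p : ℝ) ^ ((3 : ℝ) / 2) / 2) / (((p : ℝ) / 2) * (Real.sqrt p + 2)) ∧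
      ((p : ℝ) ^ ((3 : ℝ) / 2) / 2) / (((p : ℝ) / 2) * (Real.sqrt p + 2)) =
        Real.sqrt p / (Real.sqrt p + 2)) ∧
    (∀ ε : ℝ, 0 < ε → ∃ N : ℕ, ∀ q : ℕ, N ≤ q → ∀ (hq1 : q.Prime) (hq : q % 4 = 1),
      haveI : Fact q.Prime := ⟨hq1⟩;
      1 - ε < (paleyGraph q hq).energy / paleyE0 q) := by
  haveI : Fact p.Prime := ⟨hp1⟩
  have hp1r : (11:ℝ) ≤ (p:ℝ) := by exact_mod_cast hp11
  have hs0 : (0:ℝ) < Real.sqrt p := Real.sqrt_pos.2 (by linarith)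
  have heq : ((p : ℝ) ^ ((3 : ℝ) / 2) / 2) / (((p : ℝ) / 2) * (Real.sqrt p + 2))
      = Real.sqrt p / (Real.sqrt p + 2) := by
    have h32 : (p:ℝ) ^ ((3:ℝ)/2) = (p:ℝ) * Real.sqrt p := by
      rw [show (3:ℝ)/2 = 1 + 1/2 by norm_num, Real.rpow_add (by linarith), Real.rpow_one,
        ← Real.sqrt_eq_rpow]
    rw [h32]
    rw [div_eq_div_iff (by positivity) (by positivity)]
    ring
  refine ⟨⟨?_, heq⟩, ?_⟩
  · rw [gt_iff_lt, heq]
    exact PaleyProofAux.paley_main p hp1 hp11 hp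
  · intro ε hε
    refine ⟨max 11 (⌈(4:ℝ)/ε^2⌉₊ + 1), ?_⟩
    intro q hq hq1 hq4
    haveI : Fact q.Prime := ⟨hq1⟩
    have hq11 : 11 ≤ q := le_trans (le_max_left _ _) hq
    have hmain := PaleyProofAux.paley_main q hq1 hq11 hq4
    have hqr : (4:ℝ)/ε^2 < (q:ℝ) := by
      have hle : ⌈(4:ℝ)/ε^2⌉₊ + 1 ≤ q := le_trans (le_max_right _ _) hq
      have h1 : ((⌈(4:ℝ)/ε^2⌉₊ : ℝ)) < (q:ℝ) := by exact_mod_cast by omega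
      exact lt_of_le_of_lt (Nat.le_ceil _) h1
    have hsq : 2/ε < Real.sqrt q := by
      rw [Real.lt_sqrt (by positivity), div_pow]
      rw [show ((2:ℝ)^2 : ℝ) = 4 by norm_num]
      exact hqr
    have hu0 : (0:ℝ) < Real.sqrt q := lt_trans (by positivity) hsq
    have hfinal : 1 - ε < Real.sqrt q / (Real.sqrt q + 2) := by
      rw [lt_div_iff₀ (by linarith)]
      nlinarith [mul_lt_mul_of_pos_left hsq hε,
        mul_div_cancel₀ (2:ℝ) (ne_of_gt hε)]
    exact lt_trans hfinal hmain
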